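/- For the metric in the frame above, the curvature tensor satisfies $R(U,\mathbf{T})V=g(U,V)\mathbf{T}-g(\mathbf{T},V)U$ for all $U,V$ in the span of $\{\mathbf{X},\mathbf{Y},\mathbf{T}\}$ (the Sasakian curvature identity). -/
import Mathlib


def gmet (u v : Fin 3 → ℝ) : ℝ := u 0 * v 0 + u 1 * v 1 + u 2 * v 2

def lieBr (u v : Fin 3 → ℝ) : Fin 3 → ℝ :=
  ![0, 2 * (u 0 * v 1 - u 1 * v 0), -2 * (u 0 * v 1 - u 1 * v 0)]

def eT : Fin 3 → ℝ := ![0, 0, 1]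

/-- The curvature tensor `R(X,Y)Z = ∇_Y∇_X Z - ∇_X∇_Y Z + ∇_{[X,Y]} Z`. -/
def curv (nab : (Fin 3 → ℝ) → (Fin 3 → ℝ) → (Fin 3 → ℝ))
    (u v w : Fin 3 → ℝ) : Fin 3 → ℝ :=
  nab v (nab u w) - nab u (nab v w) + nab (lieBr u v) w

/-- The Sasakian curvature identity `R(U,T)V = g(U,V)T - g(T,V)U` for all `U, V`. -/
theorem sasakian_curvature_identity
    (nab : (Fin 3 → ℝ) → (Fin 3 → ℝ) → (Fin 3 → ℝ))
    (hK : ∀ u v w : Fin 3 → ℝ,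
      -2 * gmet w (nab v u) = gmet (lieBr u w) v + gmet (lieBr v w) u + gmet (lieBr u v) w) :
    ∀ u v : Fin 3 → ℝ,
      curv nab u eT v = gmet u v • eT - gmet eT v • u := by
  have hform : ∀ v u : Fin 3 → ℝ, nab v u =
      ![2*u 1*v 1 - u 1*v 2 - u 2*v 1,
        -2*u 0*v 1 + u 0*v 2 + u 2*v 0,
        u 0*v 1 - u 1*v 0] := by
    intro v u
    have h0 := hK u v ![1,0,0]
    have h1 := hK u v ![0,1,0]
    have h2 := hK u v ![0,0,1]
    simp [gmet, lieBr] at h0 h1 h2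
    funext k
    fin_cases k <;> simp <;> linarith
  intro u v
  funext k
  fin_cases k <;>
    simp [curv, hform, gmet, lieBr, eT, Pi.sub_apply, Pi.add_apply] <;> ring
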